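/- If x : [0,∞) → ℝ₊ is continuous, α > 0, λ₁ > λ₂ > 0, and for every t ≥ 0 we have x(t) ≤ α + λ₂∫₀ᵗ e^{−λ₁(t−s)} x(s) ds, then x(t) ≤ α λ₁/(λ₁ − λ₂) for all t ≥ 0. -/
import Mathlib


open MeasureTheory intervalIntegral

lemma exp_int_aux (l1 c : ℝ) (hl1 : 0 < l1) (hc : 0 ≤ c) :
    (∫ s in (0:ℝ)..c, Real.exp (-l1 * (c - s))) ≤ 1 / l1 := by
  have h1 : (∫ s in (0:ℝ)..c, Real.exp (-l1 * (c - s)))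
      = Real.exp (-l1 * c) * ∫ s in (0:ℝ)..c, Real.exp (l1 * s) := by
    rw [← intervalIntegral.integral_const_mul]
    congr 1
    ext s
    rw [← Real.exp_add]
    ring_nf
  have h2 : (∫ s in (0:ℝ)..c, Real.exp (l1 * s))
      = (Real.exp (l1 * c) - 1) / l1 := by
    have hd : ∀ s ∈ Set.uIcc (0:ℝ) c, HasDerivAt (fun u => Real.exp (l1 * u) / l1)
        (Real.exp (l1 * s)) s := by
      intro s _
      have h := (((hasDerivAt_id s).const_mul l1).exp).div_const l1
      simpa [mul_comm, mul_div_assoc, mul_div_cancel_left₀, hl1.ne'] using h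
    rw [intervalIntegral.integral_eq_sub_of_hasDerivAt hd
      (by apply Continuous.intervalIntegrable; continuity)]
    simp [sub_div]
  rw [h1, h2]
  have key : Real.exp (-l1 * c) * ((Real.exp (l1 * c) - 1) / l1)
      = (1 - Real.exp (-l1 * c)) / l1 := by
    rw [mul_div_assoc', mul_sub, ← Real.exp_add]
    ring_nf
    simp
    ring
  rw [key]
  gcongr
  linarith [Real.exp_pos (-l1 * c)]

/-- Itô–Nisio Lemma 8.2 (Gronwall-type uniform bound). -/
theorem ito_nisio_gronwall_2
    (x : ℝ → ℝ) (α l1 l2 : ℝ)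
    (hx : ContinuousOn x (Set.Ici 0))
    (hxpos : ∀ t, 0 ≤ t → 0 ≤ x t)
    (hα : 0 < α) (hl2 : 0 < l2) (hl12 : l2 < l1)
    (hineq : ∀ t, 0 ≤ t →
      x t ≤ α + l2 * ∫ s in (0:ℝ)..t, Real.exp (-l1 * (t - s)) * x s) :
    ∀ t, 0 ≤ t → x t ≤ α * l1 / (l1 - l2) := by
  intro t ht
  have hl1 : (0:ℝ) < l1 := hl2.trans hl12
  have hxc : ContinuousOn x (Set.Icc 0 t) := hx.mono (fun s hs => hs.1)
  obtain ⟨c, hc, hmax⟩ := isCompact_Icc.exists_isMaxOn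
    ⟨0, Set.mem_Icc.mpr ⟨le_refl 0, ht⟩⟩ hxc
  have hc0 : 0 ≤ c := hc.1
  have hct : x t ≤ x c := hmax (Set.mem_Icc.mpr ⟨ht, le_refl t⟩)
  have hxc0 : 0 ≤ x c := hxpos c hc0
  -- integral bound
  have hint1 : IntervalIntegrable (fun s => Real.exp (-l1 * (c - s)) * x s)
      volume 0 c := by
    apply ContinuousOn.intervalIntegrable
    apply ContinuousOn.mul
    · exact (Real.continuous_exp.comp (by continuity)).continuousOn
    · exact (hx.mono (fun s hs => by
        rw [Set.uIcc_of_le hc0] at hs; exact hs.1)).mono (le_refl _)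
  have hint2 : IntervalIntegrable (fun s => Real.exp (-l1 * (c - s)) * x c)
      volume 0 c := by
    apply Continuous.intervalIntegrable
    continuity
  have hmono : (∫ s in (0:ℝ)..c, Real.exp (-l1 * (c - s)) * x s)
      ≤ ∫ s in (0:ℝ)..c, Real.exp (-l1 * (c - s)) * x c := by
    apply intervalIntegral.integral_mono_on hc0 hint1 hint2
    intro s hs
    have := hmax (Set.mem_Icc.mpr ⟨hs.1, hs.2.trans hc.2⟩)
    exact mul_le_mul_of_nonneg_left this (Real.exp_pos _).le
  have hval : (∫ s in (0:ℝ)..c, Real.exp (-l1 * (c - s)) * x c)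
      ≤ x c / l1 := by
    rw [intervalIntegral.integral_mul_const]
    calc (∫ s in (0:ℝ)..c, Real.exp (-l1 * (c - s))) * x c
        ≤ (1 / l1) * x c := mul_le_mul_of_nonneg_right (exp_int_aux l1 c hl1 hc0) hxc0
      _ = x c / l1 := by ring
  have hkey : x c ≤ α + l2 * (x c / l1) := by
    calc x c ≤ α + l2 * ∫ s in (0:ℝ)..c, Real.exp (-l1 * (c - s)) * x s :=
          hineq c hc0
      _ ≤ α + l2 * (x c / l1) := by
          gcongr
          exact hmono.trans hval
  have h1 : x c ≤ α * l1 / (l1 - l2) := by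
    rw [le_div_iff₀ (by linarith)]
    have := mul_le_mul_of_nonneg_right hkey (le_of_lt hl1)
    rw [add_mul, mul_assoc, div_mul_cancel₀ _ hl1.ne'] at this
    nlinarith
  exact hct.trans h1
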